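/- Consider the partially linear model Y = βᵀX + f(Z) + ε, where X is a square-integrable random vector in ℝ^g, Z is a random element, β ∈ ℝ^g, f(Z) is a square-integrable real random variable measurable with respect to Z, Y is square-integrable, and E[ε | X, Z] = 0. Let ν(Z) = E[X | Z] and μ(Z) = E[Y | Z], and assume the g×g matrix E[(X − ν(Z))(X − ν(Z))ᵀ] is invertible. Then β = {E[(X − ν(Z))(X − ν(Z))ᵀ]}^{-1} E[(X − ν(Z))(Y − μ(Z))]. -/

import Mathlib

open MeasureTheory

/-- The conditional expectation of an `L²` function is in `L²`. -/
lemma memLp_two_condexp {Ω : Type*} {m : MeasurableSpace Ω} {m0 : MeasurableSpace Ω}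
    (P : Measure Ω) [IsFiniteMeasure P]
    (hm : m ≤ m0) {f : Ω → ℝ} (hf : MemLp f 2 P) :
    MemLp (P[f|m]) 2 P := by
  exact hf.condExp one_le_two

/-- In the partially linear model `Y = βᵀX + f(Z) + ε` with `E[ε | X,Z] = 0` and
`E[(X−ν(Z))(X−ν(Z))ᵀ]` invertible,
`β = {E[(X−ν(Z))(X−ν(Z))ᵀ]}⁻¹ E[(X−ν(Z))(Y−μ(Z))]`. -/
theorem stmt7
    {Ω : Type*} {m0 : MeasurableSpace Ω} (P : Measure Ω) [IsProbabilityMeasure P]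
    {g : ℕ} {𝒵 : Type*} [MeasurableSpace 𝒵]
    (X : Ω → Fin g → ℝ) (Z : Ω → 𝒵) (Y ε : Ω → ℝ)
    (hXm : Measurable X) (hZm : Measurable Z)
    (hX2 : ∀ i, MemLp (fun ω => X ω i) 2 P) (hY2 : MemLp Y 2 P)
    (f : 𝒵 → ℝ) (hf : Measurable f) (hf2 : MemLp (fun ω => f (Z ω)) 2 P)
    (β : Fin g → ℝ)
    (hmodel : ∀ ω, Y ω = (∑ i, β i * X ω i) + f (Z ω) + ε ω)
    (hε : P[ε | MeasurableSpace.comap (fun ω => (X ω, Z ω)) inferInstance] =ᵐ[P] 0)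
    (ν : Fin g → Ω → ℝ)
    (hν : ∀ i, ν i = P[(fun ω => X ω i) | MeasurableSpace.comap Z inferInstance])
    (M : Matrix (Fin g) (Fin g) ℝ)
    (hM : ∀ i j, M i j = ∫ ω, (X ω i - ν i ω) * (X ω j - ν j ω) ∂P)
    (hMinv : IsUnit M.det) :
    β = M⁻¹.mulVec (fun i => ∫ ω,
        (X ω i - ν i ω) * (Y ω - (P[Y | MeasurableSpace.comap Z inferInstance]) ω) ∂P) := by
  set mZ := MeasurableSpace.comap Z inferInstance with hmZdef
  set mXZ := MeasurableSpace.comap (fun ω => (X ω, Z ω)) inferInstance with hmXZdef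
  have hmZ : mZ ≤ m0 := hZm.comap_le
  have hmXZ : mXZ ≤ m0 := (hXm.prodMk hZm).comap_le
  have hZle : mZ ≤ mXZ := by
    rw [hmZdef, hmXZdef]
    have h1 : Z = Prod.snd ∘ (fun ω => (X ω, Z ω)) := rfl
    rw [h1, ← MeasurableSpace.comap_comp]
    exact MeasurableSpace.comap_mono measurable_snd.comap_le
  -- measurability
  have hpair : Measurable[mXZ] (fun ω => (X ω, Z ω)) := Measurable.of_comap_le le_rfl
  have hXiXZ : ∀ i, StronglyMeasurable[mXZ] fun ω => X ω i := fun i =>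
    (((measurable_pi_apply i).comp measurable_fst).comp hpair).stronglyMeasurable
  have hfZmeas : StronglyMeasurable[mZ] fun ω => f (Z ω) :=
    (hf.comp (Measurable.of_comap_le le_rfl)).stronglyMeasurable
  -- MemLp facts
  have hν2 : ∀ i, MemLp (ν i) 2 P := fun i => (hν i) ▸ memLp_two_condexp P hmZ (hX2 i)
  have hνm : ∀ i, StronglyMeasurable[mXZ] (ν i) := fun i =>
    (hν i) ▸ (stronglyMeasurable_condExp.mono hZle)
  have hL2 : MemLp (fun ω => ∑ i, β i * X ω i) 2 P := by
    have hfun : (fun ω => ∑ i, β i * X ω i) = ∑ i : Fin g, fun ω => β i * X ω i := by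
      funext ω; simp
    rw [hfun]
    exact memLp_finsetSum' Finset.univ (fun i _ => (hX2 i).const_mul (β i))
  have hε2 : MemLp ε 2 P := by
    have hdec : ε = fun ω => Y ω - ((∑ i, β i * X ω i) + f (Z ω)) := by
      funext ω; rw [hmodel ω]; ring
    rw [hdec]; exact hY2.sub (hL2.add hf2)
  have hmul : ∀ {u v : Ω → ℝ}, MemLp u 2 P → MemLp v 2 P →
      Integrable (fun ω => u ω * v ω) P := by
    intro u v hu hv
    have h1 : MemLp (u • v) 1 P := hv.smul hu
    exact h1.integrable le_rfl
  have hεint : Integrable ε P := hε2.integrable one_le_two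
  have hLint : Integrable (fun ω => ∑ i, β i * X ω i) P := hL2.integrable one_le_two
  have hfint : Integrable (fun ω => f (Z ω)) P := hf2.integrable one_le_two
  -- E[h ε] = 0 for mXZ-measurable L² functions h
  have hEzero : ∀ (h : Ω → ℝ), StronglyMeasurable[mXZ] h → MemLp h 2 P →
      ∫ ω, h ω * ε ω ∂P = 0 := by
    intro h hhm hh2
    have hint : Integrable (fun ω => h ω * ε ω) P := hmul hh2 hε2
    have h1 : ∫ ω, (P[(fun ω => h ω * ε ω)|mXZ]) ω ∂P = ∫ ω, h ω * ε ω ∂P :=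
      integral_condExp hmXZ
    have h2 : P[(fun ω => h ω * ε ω)|mXZ] =ᵐ[P] fun ω => h ω * (P[ε|mXZ]) ω :=
      condExp_mul_of_stronglyMeasurable_left hhm hint hεint
    have h3 : (fun ω => h ω * (P[ε|mXZ]) ω) =ᵐ[P] (fun _ => (0:ℝ)) :=
      hε.mono fun ω hω => by simp [hω]
    calc ∫ ω, h ω * ε ω ∂P = ∫ ω, (P[(fun ω => h ω * ε ω)|mXZ]) ω ∂P := h1.symm
      _ = ∫ _, (0:ℝ) ∂P := integral_congr_ae (h2.trans h3)
      _ = 0 := integral_zero _ _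
  -- conditional expectation of Y given Z
  have hεZ : P[ε|mZ] =ᵐ[P] 0 := by
    have h1 : P[P[ε|mXZ]|mZ] =ᵐ[P] P[ε|mZ] := condExp_condExp_of_le hZle hmXZ
    have h2 : P[P[ε|mXZ]|mZ] =ᵐ[P] P[(0 : Ω → ℝ)|mZ] := condExp_congr_ae hε
    refine h1.symm.trans (h2.trans ?_)
    rw [condExp_zero]
  have hμeq : P[Y|mZ] =ᵐ[P] fun ω => (∑ j, β j * ν j ω) + f (Z ω) := by
    have hYeq : Y = (fun ω => (∑ i, β i * X ω i) + f (Z ω)) + ε := by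
      funext ω; exact hmodel ω
    have step1 : P[Y|mZ] =ᵐ[P]
        P[(fun ω => (∑ i, β i * X ω i) + f (Z ω))|mZ] + P[ε|mZ] := by
      rw [hYeq]; exact condExp_add (hLint.add hfint) hεint _
    have step2 : P[(fun ω => (∑ i, β i * X ω i) + f (Z ω))|mZ] =ᵐ[P]
        P[(fun ω => ∑ i, β i * X ω i)|mZ] + P[(fun ω => f (Z ω))|mZ] :=
      condExp_add hLint hfint _
    have step3 : P[(fun ω => ∑ i, β i * X ω i)|mZ] =ᵐ[P] fun ω => ∑ j, β j * ν j ω := by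
      have hsum : (fun ω => ∑ i, β i * X ω i)
          = ∑ i : Fin g, fun ω => β i * X ω i := by
        funext ω; simp [Finset.sum_apply]
      have hs : P[(fun ω => ∑ i, β i * X ω i)|mZ] =ᵐ[P]
          ∑ i : Fin g, P[(fun ω => β i * X ω i)|mZ] := by
        rw [hsum]
        exact condExp_finsetSum
          (fun i _ => ((hX2 i).integrable one_le_two).const_mul (β i)) _
      have hterm : ∀ i : Fin g,
          P[(fun ω => β i * X ω i)|mZ] =ᵐ[P] fun ω => β i * ν i ω := by
        intro i
        have := condExp_smul (m := mZ) (μ := P) (β i) (fun ω => X ω i)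
        refine this.mono fun ω hω => ?_
        rw [hν i]; exact hω
      have hall : ∀ᵐ ω ∂P, ∀ i : Fin g,
          (P[(fun ω => β i * X ω i)|mZ]) ω = β i * ν i ω :=
        (ae_all_iff.2 hterm)
      refine hs.trans (hall.mono fun ω hω => ?_)
      simp only [Finset.sum_apply]
      exact Finset.sum_congr rfl fun i _ => hω i
    have step4 : P[(fun ω => f (Z ω))|mZ] =ᵐ[P] fun ω => f (Z ω) := by
      rw [condExp_of_stronglyMeasurable hmZ hfZmeas hfint]
    refine step1.trans ?_
    filter_upwards [step2, step3, step4, hεZ] with ω h2 h3 h4 h0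
    simp only [Pi.add_apply, Pi.zero_apply] at h2 h0 ⊢
    rw [h2, h3, h4, h0, add_zero]
  -- the key integral identity
  have hkey : ∀ i, ∫ ω, (X ω i - ν i ω) * (Y ω - (P[Y|mZ]) ω) ∂P
      = ∑ j, M i j * β j := by
    intro i
    set h : Ω → ℝ := fun ω => X ω i - ν i ω with hhdef
    have hhm : StronglyMeasurable[mXZ] h := (hXiXZ i).sub (hνm i)
    have hh2 : MemLp h 2 P := (hX2 i).sub (hν2 i)
    have hae : (fun ω => h ω * (Y ω - (P[Y|mZ]) ω)) =ᵐ[P]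
        fun ω => (∑ j, β j * (h ω * (X ω j - ν j ω))) + h ω * ε ω := by
      refine hμeq.mono fun ω hω => ?_
      show h ω * (Y ω - (P[Y|mZ]) ω)
          = (∑ j, β j * (h ω * (X ω j - ν j ω))) + h ω * ε ω
      have : Y ω - (P[Y|mZ]) ω = (∑ j, β j * (X ω j - ν j ω)) + ε ω := by
        rw [hω, hmodel ω]
        simp only [mul_sub, Finset.sum_sub_distrib]
        ring
      rw [this, mul_add, Finset.mul_sum]
      congr 1
      exact Finset.sum_congr rfl fun j _ => by ring
    rw [integral_congr_ae hae]
    have hint1 : ∀ j : Fin g, Integrable (fun ω => β j * (h ω * (X ω j - ν j ω))) P :=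
      fun j => (hmul hh2 ((hX2 j).sub (hν2 j))).const_mul (β j)
    have hintsum : Integrable (fun ω => ∑ j, β j * (h ω * (X ω j - ν j ω))) P := by
      apply integrable_finset_sum
      intro j _
      exact hint1 j
    rw [integral_add hintsum (hmul hh2 hε2), hEzero h hhm hh2, add_zero,
      integral_finset_sum _ (fun j _ => hint1 j)]
    refine Finset.sum_congr rfl fun j _ => ?_
    rw [integral_const_mul]
    simp only [hhdef]
    rw [← hM i j, mul_comm]
  -- conclude by linear algebra
  have hvec : (fun i => ∫ ω, (X ω i - ν i ω) * (Y ω - (P[Y|mZ]) ω) ∂P)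
      = M.mulVec β := by
    funext i
    rw [hkey i]
    rfl
  rw [hvec, Matrix.mulVec_mulVec, Matrix.nonsing_inv_mul M hMinv, Matrix.one_mulVec]
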